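/- Let X and O be standard Borel spaces, o : X → O a measurable map, and μ_base, ν Borel probability measures on X such that o_#ν is absolutely continuous with respect to o_#μ_base and D_KL(o_#ν‖o_#μ_base) < ∞. Let μ* be the tilted measure defined by dμ* = (w ∘ o) dμ_base with w = d(o_#ν)/d(o_#μ_base). Then: (1) for every Borel probability measure μ on X with o_#μ = o_#ν, one has D_KL(μ‖μ_base) ≥ D_KL(o_#ν‖o_#μ_base); (2) D_KL(μ*‖μ_base) = D_KL(o_#ν‖o_#μ_base); hence μ* minimizes D_KL(·‖μ_base) over the set {μ : o_#μ = o_#ν} of Borel probability measures satisfying the observable constraint. -/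

import Mathlib

open MeasureTheory
open scoped ENNReal Classical

/-- Kullback–Leibler divergence: `∫ log (dμ/dρ) dμ` when `μ ≪ ρ` and the integral is
finite (i.e. the integrand is integrable), and `+∞` otherwise. -/
noncomputable def klDiv {X : Type*} [MeasurableSpace X] (μ ρ : Measure X) : ℝ≥0∞ :=
  if μ ≪ ρ ∧ Integrable (fun x => Real.log (μ.rnDeriv ρ x).toReal) μ
  then ENNReal.ofReal (∫ x, Real.log (μ.rnDeriv ρ x).toReal ∂μ)
  else ⊤

/-- The tilted measure `μ*` defined by `dμ* = (w ∘ o) dμ_base`, where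
`w = d(o_#ν)/d(o_#μ_base)` is the Radon–Nikodym derivative. -/
noncomputable def tilted {X O : Type*} [MeasurableSpace X] [MeasurableSpace O]
    (o : X → O) (μbase ν : Measure X) : Measure X :=
  μbase.withDensity (fun x => (ν.map o).rnDeriv (μbase.map o) (o x))


lemma my_map_withDensity_comp {X O : Type*} [MeasurableSpace X] [MeasurableSpace O]
    (μ : Measure X) {o : X → O} (ho : Measurable o) {g : O → ℝ≥0∞} (hg : Measurable g) :
    (μ.withDensity (fun x => g (o x))).map o = (μ.map o).withDensity g := by
  ext s hs
  rw [Measure.map_apply ho hs, withDensity_apply _ (ho hs), withDensity_apply _ hs,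
    setLIntegral_map hs hg ho]

lemma my_integral_llr_nonneg {α : Type*} [MeasurableSpace α] (μ ν : Measure α)
    [IsProbabilityMeasure μ] [IsProbabilityMeasure ν] (h : μ ≪ ν)
    (hint : Integrable (fun x => Real.log (μ.rnDeriv ν x).toReal) μ) :
    0 ≤ ∫ x, Real.log (μ.rnDeriv ν x).toReal ∂μ := by
  set f := μ.rnDeriv ν with hfdef
  have hf : Measurable f := Measure.measurable_rnDeriv μ ν
  have hpos : ∀ᵐ x ∂μ, 0 < f x := Measure.rnDeriv_pos h
  have hlt : ∀ᵐ x ∂μ, f x < ⊤ := h.ae_le (Measure.rnDeriv_lt_top μ ν)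
  have hinv_lint : ∫⁻ x, (f x)⁻¹ ∂μ ≤ 1 := by
    conv_lhs => rw [← Measure.withDensity_rnDeriv_eq μ ν h]
    rw [lintegral_withDensity_eq_lintegral_mul _ hf (show Measurable fun x => (f x)⁻¹ from hf.inv)]
    calc ∫⁻ x, (f * fun x => (f x)⁻¹) x ∂ν ≤ ∫⁻ _, 1 ∂ν := by
          refine lintegral_mono fun x => ?_
          simp only [Pi.mul_apply]
          exact ENNReal.mul_inv_le_one (f x)
      _ = 1 := by simp
  have hinv_int : Integrable (fun x => ((f x)⁻¹).toReal) μ := by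
    refine ⟨(hf.inv.ennreal_toReal).aestronglyMeasurable, ?_⟩
    rw [hasFiniteIntegral_iff_ofReal (ae_of_all _ fun x => ENNReal.toReal_nonneg)]
    refine lt_of_le_of_lt (lintegral_mono fun x => ENNReal.ofReal_toReal_le) ?_
    exact lt_of_le_of_lt hinv_lint (by simp)
  have hinv_le : ∫ x, ((f x)⁻¹).toReal ∂μ ≤ 1 := by
    rw [integral_toReal (show AEMeasurable (fun x => (f x)⁻¹) μ from hf.inv.aemeasurable) ?_]
    · calc (∫⁻ x, (f x)⁻¹ ∂μ).toReal ≤ (1 : ℝ≥0∞).toReal :=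
        ENNReal.toReal_mono (by simp) hinv_lint
        _ = 1 := by simp
    · filter_upwards [hpos] with x hx
      exact ENNReal.inv_lt_top.mpr hx
  have key : ∀ᵐ x ∂μ, 1 - ((f x)⁻¹).toReal ≤ Real.log (f x).toReal := by
    filter_upwards [hpos, hlt] with x h0 h1
    have hg : 0 < (f x).toReal := ENNReal.toReal_pos h0.ne' h1.ne
    have := Real.log_le_sub_one_of_pos (inv_pos.mpr hg)
    rw [Real.log_inv] at this
    rw [ENNReal.toReal_inv]
    linarith
  have hmono : ∫ x, (1 - ((f x)⁻¹).toReal) ∂μ ≤ ∫ x, Real.log (f x).toReal ∂μ :=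
    integral_mono_ae ((integrable_const 1).sub hinv_int) hint key
  rw [integral_sub (integrable_const 1) hinv_int] at hmono
  simp only [integral_const, measure_univ, ENNReal.toReal_one, probReal_univ, smul_eq_mul, one_mul] at hmono
  linarith

theorem tilted_measure_minimizes_klDiv
    {X O : Type*} [MeasurableSpace X] [StandardBorelSpace X]
    [MeasurableSpace O] [StandardBorelSpace O]
    (o : X → O) (ho : Measurable o)
    (μbase ν : Measure X) [IsProbabilityMeasure μbase] [IsProbabilityMeasure ν]
    (hac : ν.map o ≪ μbase.map o)
    (hKL : klDiv (ν.map o) (μbase.map o) < ⊤) :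
    (∀ μ : Measure X, IsProbabilityMeasure μ → μ.map o = ν.map o →
      klDiv (ν.map o) (μbase.map o) ≤ klDiv μ μbase) ∧
    klDiv (tilted o μbase ν) μbase = klDiv (ν.map o) (μbase.map o) ∧
    (∀ μ : Measure X, IsProbabilityMeasure μ → μ.map o = ν.map o →
      klDiv (tilted o μbase ν) μbase ≤ klDiv μ μbase) := by
  classical
  set w := (ν.map o).rnDeriv (μbase.map o) with hw
  have hwm : Measurable w := Measure.measurable_rnDeriv _ _
  haveI hob : IsProbabilityMeasure (ν.map o) := Measure.isProbabilityMeasure_map ho.aemeasurable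
  haveI hbb : IsProbabilityMeasure (μbase.map o) := Measure.isProbabilityMeasure_map ho.aemeasurable
  have hIntw : Integrable (fun y => Real.log (w y).toReal) (ν.map o) := by
    by_contra hc
    rw [klDiv, if_neg (fun hh => hc hh.2)] at hKL
    exact absurd rfl hKL.ne
  have hobsKL : klDiv (ν.map o) (μbase.map o)
      = ENNReal.ofReal (∫ y, Real.log (w y).toReal ∂(ν.map o)) := by
    rw [klDiv, if_pos ⟨hac, hIntw⟩]
  set μs := tilted o μbase ν with hμs
  have hmap : μs.map o = ν.map o := by
    rw [hμs, tilted, my_map_withDensity_comp μbase ho hwm,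
      Measure.withDensity_rnDeriv_eq _ _ hac]
  haveI hμsprob : IsProbabilityMeasure μs := by
    constructor
    have h1 : μs Set.univ = (μs.map o) Set.univ := by
      rw [Measure.map_apply ho MeasurableSet.univ, Set.preimage_univ]
    rw [h1, hmap, measure_univ]
  have hμsac : μs ≪ μbase := withDensity_absolutelyContinuous _ _
  have hrnμs : μs.rnDeriv μbase =ᵐ[μbase] fun x => w (o x) :=
    Measure.rnDeriv_withDensity μbase (hwm.comp ho)
  have hgm : Measurable (fun y => Real.log (w y).toReal) :=
    Real.measurable_log.comp hwm.ennreal_toReal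
  -- Part (2)
  have h2comp : Integrable (fun x => Real.log (w (o x)).toReal) μs := by
    have := (integrable_map_measure hgm.aestronglyMeasurable ho.aemeasurable).mp
      (by rw [hmap]; exact hIntw)
    exact this
  have hIntμs' : Integrable (fun x => Real.log (μs.rnDeriv μbase x).toReal) μs :=
    h2comp.congr (by filter_upwards [hμsac.ae_le hrnμs] with x hx; rw [hx])
  have hInteq : ∫ x, Real.log (μs.rnDeriv μbase x).toReal ∂μs
      = ∫ y, Real.log (w y).toReal ∂(ν.map o) := by
    rw [integral_congr_ae (g := fun x => Real.log (w (o x)).toReal)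
        (by filter_upwards [hμsac.ae_le hrnμs] with x hx; rw [hx]),
      ← hmap, integral_map ho.aemeasurable hgm.aestronglyMeasurable]
  have part2 : klDiv μs μbase = klDiv (ν.map o) (μbase.map o) := by
    rw [klDiv, if_pos ⟨hμsac, hIntμs'⟩, hobsKL, hInteq]
  -- Part (1)
  have part1 : ∀ μ : Measure X, IsProbabilityMeasure μ → μ.map o = ν.map o →
      klDiv (ν.map o) (μbase.map o) ≤ klDiv μ μbase := by
    intro μ hμprob hμo
    by_cases hcond : μ ≪ μbase ∧ Integrable (fun x => Real.log (μ.rnDeriv μbase x).toReal) μ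
    swap
    · have hT : klDiv μ μbase = ⊤ := by rw [klDiv, if_neg hcond]
      rw [hT]; exact le_top
    obtain ⟨hμac, hIntL⟩ := hcond
    have hμμs : μ ≪ μs := by
      intro A hA0
      rw [hμs, tilted, withDensity_apply_eq_zero (f := fun x => w (o x)) (hwm.comp ho)] at hA0
      have h1 : μ ({x | w (o x) ≠ 0} ∩ A) = 0 := hμac hA0
      have hz : μ {x | w (o x) = 0} = 0 := by
        have hset : {x | w (o x) = 0} = o ⁻¹' {y | w y = 0} := rfl
        have hms : MeasurableSet {y | w y = 0} := hwm (measurableSet_singleton 0)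
        rw [hset, ← Measure.map_apply ho hms, hμo,
          ← Measure.withDensity_rnDeriv_eq _ _ hac, withDensity_apply _ hms, ← hw]
        rw [setLIntegral_congr_fun hms (fun y hy => hy)]
        simp
      have hsub : A ⊆ ({x | w (o x) ≠ 0} ∩ A) ∪ {x | w (o x) = 0} := fun x hx => by
        by_cases h : w (o x) = 0
        · exact Or.inr h
        · exact Or.inl ⟨h, hx⟩
      refine le_antisymm ?_ zero_le
      calc μ A ≤ μ (({x | w (o x) ≠ 0} ∩ A) ∪ {x | w (o x) = 0}) := measure_mono hsub
        _ ≤ μ ({x | w (o x) ≠ 0} ∩ A) + μ {x | w (o x) = 0} := measure_union_le _ _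
        _ = 0 := by rw [h1, hz, add_zero]
    have hchain : ∀ᵐ x ∂μ, μ.rnDeriv μs x * μs.rnDeriv μbase x = μ.rnDeriv μbase x :=
      hμac.ae_le (Measure.rnDeriv_mul_rnDeriv hμμs)
    have h1pos : ∀ᵐ x ∂μ, 0 < μ.rnDeriv μs x := Measure.rnDeriv_pos hμμs
    have h1lt : ∀ᵐ x ∂μ, μ.rnDeriv μs x < ⊤ := hμμs.ae_le (Measure.rnDeriv_lt_top μ μs)
    have h2pos : ∀ᵐ x ∂μ, 0 < μs.rnDeriv μbase x := hμμs.ae_le (Measure.rnDeriv_pos hμsac)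
    have h2lt : ∀ᵐ x ∂μ, μs.rnDeriv μbase x < ⊤ := hμac.ae_le (Measure.rnDeriv_lt_top μs μbase)
    have hsplit : ∀ᵐ x ∂μ, Real.log (μ.rnDeriv μbase x).toReal
        = Real.log (μ.rnDeriv μs x).toReal + Real.log (μs.rnDeriv μbase x).toReal := by
      filter_upwards [hchain, h1pos, h1lt, h2pos, h2lt] with x hc ha1 ha2 hb1 hb2
      rw [← hc, ENNReal.toReal_mul,
        Real.log_mul (ENNReal.toReal_pos ha1.ne' ha2.ne).ne'
          (ENNReal.toReal_pos hb1.ne' hb2.ne).ne']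
    have hGμ : Integrable (fun x => Real.log (w (o x)).toReal) μ := by
      have := (integrable_map_measure hgm.aestronglyMeasurable ho.aemeasurable).mp
        (by rw [hμo]; exact hIntw)
      exact this
    have hG2 : Integrable (fun x => Real.log (μs.rnDeriv μbase x).toReal) μ :=
      hGμ.congr (by filter_upwards [hμac.ae_le hrnμs] with x hx; rw [hx])
    have hGint : ∫ x, Real.log (μs.rnDeriv μbase x).toReal ∂μ
        = ∫ y, Real.log (w y).toReal ∂(ν.map o) := by
      rw [integral_congr_ae (g := fun x => Real.log (w (o x)).toReal)
          (by filter_upwards [hμac.ae_le hrnμs] with x hx; rw [hx]),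
        ← hμo, integral_map ho.aemeasurable hgm.aestronglyMeasurable]
    have hM : Integrable (fun x => Real.log (μ.rnDeriv μs x).toReal) μ := by
      apply (hIntL.sub hG2).congr
      filter_upwards [hsplit] with x hx
      simp only [Pi.sub_apply]
      linarith
    have hnn : 0 ≤ ∫ x, Real.log (μ.rnDeriv μs x).toReal ∂μ :=
      my_integral_llr_nonneg μ μs hμμs hM
    have hintsplit : ∫ x, Real.log (μ.rnDeriv μbase x).toReal ∂μ
        = (∫ x, Real.log (μ.rnDeriv μs x).toReal ∂μ)
          + ∫ x, Real.log (μs.rnDeriv μbase x).toReal ∂μ := by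
      rw [← integral_add hM hG2]
      exact integral_congr_ae hsplit
    have hμkl : klDiv μ μbase
        = ENNReal.ofReal (∫ x, Real.log (μ.rnDeriv μbase x).toReal ∂μ) := by
      rw [klDiv, if_pos ⟨hμac, hIntL⟩]
    rw [hμkl, hobsKL]
    apply ENNReal.ofReal_le_ofReal
    rw [hintsplit]
    linarith [hnn, hGint.le, hGint.ge]
  exact ⟨part1, part2, fun μ hp hm => part2 ▸ part1 μ hp hm⟩
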